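/- Let n ≥ 5 and consider on the open positive orthant U = {x ∈ ℝⁿ : xᵢ > 0 for all i} the matrix field Q defined, with indices understood cyclically modulo n, by Qᵢⱼ = (δ_{i+1,j} − δ_{i,j+1}) xᵢ xⱼ (xᵢ + xⱼ) + δ_{i+2,j} xᵢ x_{i+1} x_{i+2} − δ_{i−2,j} xᵢ x_{i−1} x_{i−2}. Then Q(x) is skew-symmetric for every x ∈ U, and the function f(x) = (x₁ x₂ ⋯ xₙ)^{−3/2} satisfies, for every index i, Σⱼ ( Qᵢⱼ(x) ∂ⱼ f(x) + f(x) ∂ⱼ Qᵢⱼ(x) ) = 0 for all x ∈ U. -/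

import Mathlib

open Matrix


lemma dd3aux (n : ℕ) (a b c j : Fin n) (x : Fin n → ℝ) :
    fderiv ℝ (fun y : Fin n → ℝ => y a * y b * y c) x (Pi.single j 1) =
      (if a = j then (1:ℝ) else 0) * x b * x c + x a * (if b = j then (1:ℝ) else 0) * x c
        + x a * x b * (if c = j then (1:ℝ) else 0) := by
  have h := ((hasFDerivAt_apply (𝕜 := ℝ) a x).mul (hasFDerivAt_apply (𝕜 := ℝ) b x)).mul
    (hasFDerivAt_apply (𝕜 := ℝ) c x)
  rw [HasFDerivAt.fderiv (f := fun y : Fin n → ℝ => y a * y b * y c) h]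
  simp only [ContinuousLinearMap.add_apply, ContinuousLinearMap.smul_apply,
    ContinuousLinearMap.proj_apply, Pi.single_apply, smul_eq_mul, Pi.mul_apply, Pi.add_apply]
  ring

lemma ddAaux (n : ℕ) (a b j : Fin n) (x : Fin n → ℝ) :
    fderiv ℝ (fun y : Fin n → ℝ => y a * y b * (y a + y b)) x (Pi.single j 1) =
      ((if a = j then (1:ℝ) else 0) * x b + x a * (if b = j then (1:ℝ) else 0)) * (x a + x b)
        + x a * x b * ((if a = j then (1:ℝ) else 0) + (if b = j then (1:ℝ) else 0)) := by
  have h := ((hasFDerivAt_apply (𝕜 := ℝ) a x).mul (hasFDerivAt_apply (𝕜 := ℝ) b x)).mul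
    ((hasFDerivAt_apply (𝕜 := ℝ) a x).add (hasFDerivAt_apply (𝕜 := ℝ) b x))
  rw [HasFDerivAt.fderiv (f := fun y : Fin n → ℝ => y a * y b * (y a + y b)) h]
  simp only [ContinuousLinearMap.add_apply, ContinuousLinearMap.smul_apply,
    ContinuousLinearMap.proj_apply, Pi.single_apply, smul_eq_mul, Pi.mul_apply, Pi.add_apply]
  ring

lemma ddfaux (n : ℕ) [NeZero n] (f : (Fin n → ℝ) → ℝ)
    (hf : ∀ x : Fin n → ℝ, f x = (∏ i : Fin n, x i) ^ (-(3 : ℝ) / 2))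
    (x : Fin n → ℝ) (hx : ∀ k, 0 < x k) (j : Fin n) :
    fderiv ℝ f x (Pi.single j 1)
      = (-(3:ℝ)/2) * (∏ k, x k) ^ (-(3 : ℝ) / 2) / x j := by
  have hfe : f = fun y : Fin n → ℝ => (∏ i, y i) ^ (-(3 : ℝ) / 2) := funext hf
  subst hfe
  have hP : (0:ℝ) < ∏ k, x k := Finset.prod_pos fun k _ => hx k
  have h1 : HasFDerivAt (fun y : Fin n → ℝ => ∏ i, y i)
      (∑ k, (∏ l ∈ Finset.univ.erase k, x l) • ContinuousLinearMap.proj k) x :=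
    hasFDerivAt_finset_prod (𝕜 := ℝ)
  have h2 := h1.rpow_const (p := (-(3:ℝ)/2)) (Or.inl hP.ne')
  rw [h2.fderiv]
  have hEj : ∏ l ∈ Finset.univ.erase j, x l = (∏ k, x k) / x j := by
    rw [eq_div_iff (hx j).ne']; exact Finset.prod_erase_mul _ _ (Finset.mem_univ j)
  simp only [ContinuousLinearMap.smul_apply, ContinuousLinearMap.sum_apply,
    ContinuousLinearMap.proj_apply, Pi.single_apply, smul_eq_mul, mul_ite, mul_one, mul_zero,
    Finset.sum_ite_eq', Finset.mem_univ, if_true]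
  rw [hEj, Real.rpow_sub_one hP.ne']
  field_simp

/-- The second Poisson structure of the periodic Volterra lattice,
`Qᵢⱼ = (δ_{i+1,j} − δ_{i,j+1}) xᵢxⱼ(xᵢ+xⱼ) + δ_{i+2,j} xᵢx_{i+1}x_{i+2} − δ_{i−2,j} xᵢx_{i−1}x_{i−2}`
(indices cyclic mod `n`, `n ≥ 5`), is skew-symmetric on the positive orthant and leaves the
volume density `f(x) = (x₁ ⋯ xₙ)^{-3/2}` invariant there: for every `i`,
`Σⱼ (Qᵢⱼ ∂ⱼf + f ∂ⱼQᵢⱼ) = 0`. -/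
theorem stmt_11 (n : ℕ) [NeZero n] (hn : 5 ≤ n)
    (Q : (Fin n → ℝ) → Matrix (Fin n) (Fin n) ℝ)
    (hQ : ∀ (x : Fin n → ℝ) (i j : Fin n),
      Q x i j = ((if i + 1 = j then (1 : ℝ) else 0) - (if i = j + 1 then 1 else 0))
          * (x i * x j * (x i + x j))
        + (if i + 2 = j then 1 else 0) * (x i * x (i + 1) * x (i + 2))
        - (if i - 2 = j then 1 else 0) * (x i * x (i - 1) * x (i - 2)))
    (f : (Fin n → ℝ) → ℝ)
    (hf : ∀ x : Fin n → ℝ, f x = (∏ i : Fin n, x i) ^ (-(3 : ℝ) / 2)) :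
    (∀ x : Fin n → ℝ, (∀ k : Fin n, 0 < x k) → (Q x)ᵀ = -(Q x)) ∧
    ∀ i : Fin n, ∀ x : Fin n → ℝ, (∀ k : Fin n, 0 < x k) →
      ∑ j : Fin n, (Q x i j * fderiv ℝ f x (Pi.single j 1)
        + f x * fderiv ℝ (fun y => Q y i j) x (Pi.single j 1)) = 0 := by
  letI := Fin.instCommRing n
  -- basic `Fin n` facts
  have hvn : ∀ m : ℕ, 0 < m → m < n → ((m : Fin n)) ≠ 0 := by
    intro m hm hmn h
    have h2 : ((m : Fin n)).val = 0 := by rw [h, Fin.val_zero]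
    rw [Fin.val_natCast, Nat.mod_eq_of_lt hmn] at h2
    omega
  have e1 : (1 : Fin n) ≠ 0 := by
    have := hvn 1 (by norm_num) (by omega); simpa using this
  have e2 : (2 : Fin n) ≠ 0 := by
    have := hvn 2 (by norm_num) (by omega); simpa using this
  have e3 : (3 : Fin n) ≠ 0 := by
    have := hvn 3 (by norm_num) (by omega); simpa using this
  have e4 : (4 : Fin n) ≠ 0 := by
    have := hvn 4 (by norm_num) (by omega); simpa using this
  constructor
  · -- skew symmetry
    intro x hx
    ext i j
    simp only [Matrix.transpose_apply, Matrix.neg_apply]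
    rw [hQ, hQ]
    by_cases h3 : i + 2 = j
    · subst h3
      rw [if_neg (fun h : i + 1 = i + 2 => e1 (by linear_combination -h)),
        if_neg (fun h : i = i + 2 + 1 => e3 (by linear_combination -h)),
        if_pos rfl,
        if_neg (fun h : i - 2 = i + 2 => e4 (by linear_combination -h)),
        if_neg (fun h : i + 2 + 1 = i => e3 (by linear_combination h)),
        if_neg (fun h : i + 2 = i + 1 => e1 (by linear_combination h)),
        if_neg (fun h : i + 2 + 2 = i => e4 (by linear_combination h)),
        if_pos (show i + 2 - 2 = i by ring),
        show i + 2 - 1 = i + 1 by ring, show i + 2 - 2 = i by ring]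
      ring
    · by_cases h4 : i - 2 = j
      · subst h4
        rw [if_neg (fun h : i + 1 = i - 2 => e3 (by linear_combination h)),
          if_neg (fun h : i = i - 2 + 1 => e1 (by linear_combination h)),
          if_neg h3,
          if_pos rfl,
          if_neg (fun h : i - 2 + 1 = i => e1 (by linear_combination -h)),
          if_neg (fun h : i - 2 = i + 1 => e3 (by linear_combination -h)),
          if_pos (show i - 2 + 2 = i by ring),
          if_neg (fun h : i - 2 - 2 = i => e4 (by linear_combination -h)),
          show i - 2 + 1 = i - 1 by ring, show i - 2 + 2 = i by ring]
        ring
      · by_cases h1 : i + 1 = j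
        · subst h1
          rw [if_pos rfl,
            if_neg (fun h : i = i + 1 + 1 => e2 (by linear_combination -h)),
            if_neg h3, if_neg h4,
            if_neg (fun h : i + 1 + 1 = i => e2 (by linear_combination h)),
            if_neg (fun h : i + 1 + 2 = i => e3 (by linear_combination h)),
            if_neg (fun h : i + 1 - 2 = i => e1 (by linear_combination -h))]
          ring
        · by_cases h2 : i = j + 1
          · subst h2
            rw [if_pos rfl, if_neg h1, if_neg h3, if_neg h4,
              if_neg (fun h : j = j + 1 + 1 => e2 (by linear_combination -h)),
              if_neg (fun h : j + 2 = j + 1 => e1 (by linear_combination h)),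
              if_neg (fun h : j - 2 = j + 1 => e3 (by linear_combination -h))]
            ring
          · rw [if_neg h1, if_neg h2, if_neg h3, if_neg h4,
              if_neg (fun h : j + 1 = i => h2 h.symm),
              if_neg (fun h : j = i + 1 => h1 h.symm),
              if_neg (fun h : j + 2 = i => h4 (by linear_combination -h)),
              if_neg (fun h : j - 2 = i => h3 (by linear_combination -h))]
            ring
  · -- invariance of the volume density
    intro i x hx
    have hdf : ∀ j : Fin n, fderiv ℝ f x (Pi.single j 1)
        = (-(3:ℝ)/2) * (∏ k, x k) ^ (-(3 : ℝ) / 2) / x j := ddfaux n f hf x hx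
    -- conditions at the four relevant columns
    have c21 : ¬(i = (i+1) + 1) := fun h => e2 (by linear_combination -h)
    have c31 : ¬(i + 2 = i + 1) := fun h => e1 (by linear_combination h)
    have c41 : ¬(i - 2 = i + 1) := fun h => e3 (by linear_combination -h)
    have c12 : ¬(i + 1 = i - 1) := fun h => e2 (by linear_combination h)
    have p2 : i = (i - 1) + 1 := by ring
    have c32 : ¬(i + 2 = i - 1) := fun h => e3 (by linear_combination h)
    have c42 : ¬(i - 2 = i - 1) := fun h => e1 (by linear_combination -h)
    have c13 : ¬(i + 1 = i + 2) := fun h => e1 (by linear_combination -h)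
    have c23 : ¬(i = (i+2) + 1) := fun h => e3 (by linear_combination -h)
    have c43 : ¬(i - 2 = i + 2) := fun h => e4 (by linear_combination -h)
    have c14 : ¬(i + 1 = i - 2) := fun h => e3 (by linear_combination h)
    have c24 : ¬(i = (i-2) + 1) := fun h => e1 (by linear_combination h)
    have c34 : ¬(i + 2 = i - 2) := fun h => e4 (by linear_combination h)
    -- entry functions at the four relevant columns
    have hfun1 : (fun y => Q y i (i+1)) = fun y : Fin n → ℝ => y i * y (i+1) * (y i + y (i+1)) :=
      funext fun y => by rw [hQ, if_pos rfl, if_neg c21, if_neg c31, if_neg c41]; ring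
    have hfun2 : (fun y => Q y i (i-1)) = fun y : Fin n → ℝ => -(y i * y (i-1) * (y i + y (i-1))) :=
      funext fun y => by rw [hQ, if_neg c12, if_pos p2, if_neg c32, if_neg c42]; ring
    have hfun3 : (fun y => Q y i (i+2)) = fun y : Fin n → ℝ => y i * y (i+1) * y (i+2) :=
      funext fun y => by rw [hQ, if_neg c13, if_neg c23, if_pos rfl, if_neg c43]; ring
    have hfun4 : (fun y => Q y i (i-2)) = fun y : Fin n → ℝ => -(y i * y (i-1) * y (i-2)) :=
      funext fun y => by rw [hQ, if_neg c14, if_neg c24, if_neg c34, if_pos rfl]; ring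
    have hQ1 : Q x i (i+1) = x i * x (i+1) * (x i + x (i+1)) := congrFun hfun1 x
    have hQ2 : Q x i (i-1) = -(x i * x (i-1) * (x i + x (i-1))) := congrFun hfun2 x
    have hQ3 : Q x i (i+2) = x i * x (i+1) * x (i+2) := congrFun hfun3 x
    have hQ4 : Q x i (i-2) = -(x i * x (i-1) * x (i-2)) := congrFun hfun4 x
    -- directional derivatives of the entries
    have hd1 : fderiv ℝ (fun y => Q y i (i+1)) x (Pi.single (i+1) 1)
        = x i * (x i + x (i+1)) + x i * x (i+1) := by
      rw [hfun1, ddAaux, if_neg (fun h : i = i + 1 => e1 (by linear_combination -h)), if_pos rfl]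
      ring
    have hd2 : fderiv ℝ (fun y => Q y i (i-1)) x (Pi.single (i-1) 1)
        = -(x i * (x i + x (i-1)) + x i * x (i-1)) := by
      rw [hfun2, fderiv_fun_neg, ContinuousLinearMap.neg_apply, ddAaux,
        if_neg (fun h : i = i - 1 => e1 (by linear_combination h)), if_pos rfl]
      ring
    have hd3 : fderiv ℝ (fun y => Q y i (i+2)) x (Pi.single (i+2) 1)
        = x i * x (i+1) := by
      rw [hfun3, dd3aux, if_neg (fun h : i = i + 2 => e2 (by linear_combination -h)),
        if_neg (fun h : i + 1 = i + 2 => e1 (by linear_combination -h)), if_pos rfl]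
      ring
    have hd4 : fderiv ℝ (fun y => Q y i (i-2)) x (Pi.single (i-2) 1)
        = -(x i * x (i-1)) := by
      rw [hfun4, fderiv_fun_neg, ContinuousLinearMap.neg_apply, dd3aux,
        if_neg (fun h : i = i - 2 => e2 (by linear_combination h)),
        if_neg (fun h : i - 1 = i - 2 => e1 (by linear_combination h)), if_pos rfl]
      ring
    -- reduce the sum to the four relevant columns
    have hsub : ({i - 2, i - 1, i + 1, i + 2} : Finset (Fin n)) ⊆ Finset.univ :=
      Finset.subset_univ _
    rw [← Finset.sum_subset hsub (by
      intro j _ hj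
      simp only [Finset.mem_insert, Finset.mem_singleton, not_or] at hj
      obtain ⟨hj1, hj2, hj3, hj4⟩ := hj
      have c1 : ¬(i + 1 = j) := fun h => hj3 h.symm
      have c2 : ¬(i = j + 1) := fun h => hj2 (by linear_combination -h)
      have c3 : ¬(i + 2 = j) := fun h => hj4 h.symm
      have c4 : ¬(i - 2 = j) := fun h => hj1 h.symm
      have hQ0 : Q x i j = 0 := by
        rw [hQ, if_neg c1, if_neg c2, if_neg c3, if_neg c4]; ring
      have hfun0 : (fun y => Q y i j) = fun _ : Fin n → ℝ => (0:ℝ) :=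
        funext fun y => by rw [hQ, if_neg c1, if_neg c2, if_neg c3, if_neg c4]; ring
      rw [hQ0, hfun0, fderiv_fun_const]
      simp)]
    have m1 : (i - 2 : Fin n) ∉ ({i - 1, i + 1, i + 2} : Finset (Fin n)) := by
      simp only [Finset.mem_insert, Finset.mem_singleton, not_or]
      exact ⟨fun h => e1 (by linear_combination -h), fun h => e3 (by linear_combination -h),
        fun h => e4 (by linear_combination -h)⟩
    have m2 : (i - 1 : Fin n) ∉ ({i + 1, i + 2} : Finset (Fin n)) := by
      simp only [Finset.mem_insert, Finset.mem_singleton, not_or]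
      exact ⟨fun h => e2 (by linear_combination -h), fun h => e3 (by linear_combination -h)⟩
    have m3 : (i + 1 : Fin n) ∉ ({i + 2} : Finset (Fin n)) := by
      simp only [Finset.mem_singleton]
      exact fun h => e1 (by linear_combination -h)
    rw [show ({i - 2, i - 1, i + 1, i + 2} : Finset (Fin n))
        = insert (i-2) (insert (i-1) (insert (i+1) ({i+2} : Finset (Fin n)))) from rfl,
      Finset.sum_insert m1, Finset.sum_insert m2, Finset.sum_insert m3, Finset.sum_singleton]
    rw [hQ1, hQ2, hQ3, hQ4, hd1, hd2, hd3, hd4, hdf (i+1), hdf (i-1), hdf (i+2), hdf (i-2), hf x]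
    have n1 : x (i+1) ≠ 0 := (hx _).ne'
    have n2 : x (i-1) ≠ 0 := (hx _).ne'
    have n3 : x (i+2) ≠ 0 := (hx _).ne'
    have n4 : x (i-2) ≠ 0 := (hx _).ne'
    field_simp
    ring
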